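/- Let D₁ and D₂ be probability distributions over X × Y with finite Y, let H be a class of hypotheses X → Y, and let h ∈ H. Define R_D(h) = Pr_{(x,y)~D}[h(x) ≠ y], and define the HΔH-divergence d(D₁, D₂) = sup_{(p,q) ∈ H²} |E_{x~(D₁)_X}[1[p(x) ≠ q(x)]] − E_{x~(D₂)_X}[1[p(x) ≠ q(x)]]|. Then R_{D₁}(h) ≤ R_{D₂}(h) + d(D₁, D₂) + inf_{η ∈ H} (R_{D₁}(η) + R_{D₂}(η)). -/

import Mathlib

open MeasureTheory

/-- Multiclass adaptation bound with the model-independent `HΔH`-divergence: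
`R_{D₁}(h) ≤ R_{D₂}(h) + d_{HΔH}(D₁, D₂) + inf_{η∈H}(R_{D₁}(η) + R_{D₂}(η))`. -/
theorem risk_le_risk_add_HdeltaH_div_add_adaptability
    {X Y : Type*} [MeasurableSpace X] [MeasurableSpace Y] [MeasurableSingletonClass Y]
    [Finite Y] (D₁ D₂ : Measure (X × Y))
    [IsProbabilityMeasure D₁] [IsProbabilityMeasure D₂]
    (H : Set (X → Y)) (h : X → Y) (hhH : h ∈ H)
    (hmeas : ∀ η ∈ H, Measurable η) :
    let R := fun (D : Measure (X × Y)) (f : X → Y) => (D {p | f p.1 ≠ p.2}).toReal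
    let E := fun (μ : Measure X) (p q : X → Y) => (μ {x | p x ≠ q x}).toReal
    R D₁ h ≤ R D₂ h +
      sSup {v : ℝ | ∃ p ∈ H, ∃ q ∈ H,
        v = |E (D₁.map Prod.fst) p q - E (D₂.map Prod.fst) p q|} +
      sInf {v : ℝ | ∃ η ∈ H, v = R D₁ η + R D₂ η} := by
  intro R E
  have _ : Countable Y := Finite.to_countable
  set S : Set ℝ := {v : ℝ | ∃ p ∈ H, ∃ q ∈ H,
    v = |E (D₁.map Prod.fst) p q - E (D₂.map Prod.fst) p q|} with hS
  set T : Set ℝ := {v : ℝ | ∃ η ∈ H, v = R D₁ η + R D₂ η} with hT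
  have : IsProbabilityMeasure (D₁.map Prod.fst) := Measure.isProbabilityMeasure_map measurable_fst.aemeasurable
  have : IsProbabilityMeasure (D₂.map Prod.fst) := Measure.isProbabilityMeasure_map measurable_fst.aemeasurable
  -- toReal of prob measures is in [0,1]
  have toReal_le_one : ∀ (Z : Type _) [MeasurableSpace Z] (μ : Measure Z)
      [IsProbabilityMeasure μ] (s : Set Z), (μ s).toReal ≤ 1 := by
    intro Z _ μ _ s
    have h1 : μ s ≤ 1 := prob_le_one
    calc (μ s).toReal ≤ (1 : ENNReal).toReal := ENNReal.toReal_mono ENNReal.one_ne_top h1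
      _ = 1 := by simp
  have hSbdd : BddAbove S := by
    refine ⟨1, ?_⟩
    rintro v ⟨p, hp, q, hq, rfl⟩
    have h1 := toReal_le_one X (D₁.map Prod.fst) {x | p x ≠ q x}
    have h2 := toReal_le_one X (D₂.map Prod.fst) {x | p x ≠ q x}
    have h3 : (0:ℝ) ≤ ((D₁.map Prod.fst) {x | p x ≠ q x}).toReal := ENNReal.toReal_nonneg
    have h4 : (0:ℝ) ≤ ((D₂.map Prod.fst) {x | p x ≠ q x}).toReal := ENNReal.toReal_nonneg
    rw [abs_sub_le_iff]
    constructor <;> simp only [E] <;> linarith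
  have hTne : T.Nonempty := ⟨R D₁ h + R D₂ h, h, hhH, rfl⟩
  have key : ∀ b ∈ T, R D₁ h - (sSup S + R D₂ h) ≤ b := by
    rintro b ⟨η, hη, rfl⟩
    rw [sub_le_iff_le_add]
    -- Key pointwise inequality for η
    have hmh : Measurable h := hmeas h hhH
    have hmη : Measurable η := hmeas η hη
    have measA : MeasurableSet {x | h x ≠ η x} :=
      (measurableSet_eq_fun hmh hmη).compl
    have measSet : ∀ (f : X → Y), Measurable f → MeasurableSet {p : X × Y | f p.1 ≠ p.2} :=
      fun f hf => (measurableSet_eq_fun (hf.comp measurable_fst) measurable_snd).compl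
    -- map equality
    have hmap : ∀ (D : Measure (X × Y)),
        (D.map Prod.fst) {x | h x ≠ η x} = D {p : X × Y | h p.1 ≠ η p.1} := by
      intro D
      rw [Measure.map_apply measurable_fst measA]
      rfl
    -- triangle: R D h ≤ R D η + E (D.map fst) h η
    have tri : ∀ (D : Measure (X × Y)) [IsProbabilityMeasure D],
        R D h ≤ R D η + ((D.map Prod.fst) {x | h x ≠ η x}).toReal := by
      intro D _
      have hsub : {p : X × Y | h p.1 ≠ p.2} ⊆
          {p : X × Y | η p.1 ≠ p.2} ∪ {p : X × Y | h p.1 ≠ η p.1} := by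
        rintro ⟨x, y⟩ hxy
        by_cases hcase : η x = y
        · right; simp only [Set.mem_setOf_eq]; intro hcontra
          exact hxy (hcontra.trans hcase)
        · left; exact hcase
      have h1 : D {p : X × Y | h p.1 ≠ p.2} ≤
          D {p : X × Y | η p.1 ≠ p.2} + D {p : X × Y | h p.1 ≠ η p.1} :=
        le_trans (measure_mono hsub) (measure_union_le _ _)
      have h2 := ENNReal.toReal_mono (a := D {p : X × Y | h p.1 ≠ p.2})
        (by exact ENNReal.add_ne_top.mpr ⟨measure_ne_top _ _, measure_ne_top _ _⟩) h1
      rw [ENNReal.toReal_add (measure_ne_top _ _) (measure_ne_top _ _)] at h2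
      rw [hmap D]
      exact h2
    -- reverse triangle for D₂: E₂ h η ≤ R₂ h + R₂ η
    have revtri : ((D₂.map Prod.fst) {x | h x ≠ η x}).toReal ≤ R D₂ h + R D₂ η := by
      have hsub : {p : X × Y | h p.1 ≠ η p.1} ⊆
          {p : X × Y | h p.1 ≠ p.2} ∪ {p : X × Y | η p.1 ≠ p.2} := by
        rintro ⟨x, y⟩ hxy
        by_cases hcase : h x = y
        · right; simp only [Set.mem_setOf_eq]; intro hcontra
          exact hxy (hcase.trans hcontra.symm)
        · left; exact hcase
      have h1 : D₂ {p : X × Y | h p.1 ≠ η p.1} ≤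
          D₂ {p : X × Y | h p.1 ≠ p.2} + D₂ {p : X × Y | η p.1 ≠ p.2} :=
        le_trans (measure_mono hsub) (measure_union_le _ _)
      have h2 := ENNReal.toReal_mono (a := D₂ {p : X × Y | h p.1 ≠ η p.1})
        (by exact ENNReal.add_ne_top.mpr ⟨measure_ne_top _ _, measure_ne_top _ _⟩) h1
      rw [ENNReal.toReal_add (measure_ne_top _ _) (measure_ne_top _ _)] at h2
      rw [hmap D₂]
      exact h2
    -- divergence bound
    have hdiv : ((D₁.map Prod.fst) {x | h x ≠ η x}).toReal -
        ((D₂.map Prod.fst) {x | h x ≠ η x}).toReal ≤ sSup S := by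
      have hmem : |E (D₁.map Prod.fst) h η - E (D₂.map Prod.fst) h η| ∈ S :=
        ⟨h, hhH, η, hη, rfl⟩
      have := le_csSup hSbdd hmem
      have habs : E (D₁.map Prod.fst) h η - E (D₂.map Prod.fst) h η ≤
          |E (D₁.map Prod.fst) h η - E (D₂.map Prod.fst) h η| := le_abs_self _
      simp only [E] at habs this ⊢
      linarith
    have t1 := tri D₁
    linarith

  have hinf := le_csInf hTne key
  linarith
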